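/- Let A be a field of characteristic zero, B a finite-dimensional commutative A-algebra all of whose residue fields are A, and π : B → A an A-algebra homomorphism. Let F ⊆ L be field extensions of A and e : F → L ⊗[A] B an A-algebra homomorphism such that π^L ∘ e is the inclusion F ↪ L. Then there exist a field extension L' of L and an A-algebra homomorphism e' : L' → L' ⊗[A] B such that: (i) π^{L'} ∘ e' = id_{L'}; (ii) e' extends e, i.e., the restriction of e' to F equals the composite of e with the natural map L ⊗[A] B → L' ⊗[A] B; and (iii) for every A-algebra homomorphism ρ : B → A, the map ρ^{L'} ∘ e' : L' → L' is bijective. -/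

import Mathlib

universe u

/-- For an `A`-algebra homomorphism `ρ : B →ₐ[A] A`, the induced `A`-algebra homomorphism
`ρ^L : L ⊗[A] B → L`, determined by `l ⊗ b ↦ l • ρ b`. -/
noncomputable def rhoHom (A L B : Type*) [CommSemiring A] [CommRing L] [Algebra A L]
    [CommRing B] [Algebra A B] (ρ : B →ₐ[A] A) : TensorProduct A L B →ₐ[A] L :=
  (Algebra.TensorProduct.rid A A L).toAlgHom.comp
    (Algebra.TensorProduct.map (AlgHom.id A L) ρ)

/-- A field extension of `A` equipped with an `A`-algebra homomorphism into its base change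
by `B` (the data underlying a `D`-field structure). -/
structure DRingData (A B : Type u) [Field A] [CommRing B] [Algebra A B] :
    Type (u + 1) where
  carrier : Type u
  [fieldCarrier : Field carrier]
  [algCarrier : Algebra A carrier]
  hom : carrier →ₐ[A] TensorProduct A carrier B

attribute [instance] DRingData.fieldCarrier DRingData.algCarrier

open Cardinal

lemma rhoHom_tmul (A L B : Type*) [CommSemiring A] [CommRing L] [Algebra A L]
    [CommRing B] [Algebra A B] (ρ : B →ₐ[A] A) (l : L) (b : B) :
    rhoHom A L B ρ (l ⊗ₜ[A] b) = ρ b • l := by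
  simp [rhoHom]

lemma rhoHom_algebraMap (A L B : Type*) [CommSemiring A] [CommRing L] [Algebra A L]
    [CommRing B] [Algebra A B] (ρ : B →ₐ[A] A) (l : L) :
    rhoHom A L B ρ (algebraMap L (TensorProduct A L B) l) = l := by
  rw [Algebra.TensorProduct.algebraMap_apply, rhoHom_tmul, map_one, one_smul]
  exact Algebra.algebraMap_self_apply l
open Cardinal

lemma exists_equiv_of_two (F K1 K2 : Type u) [Field F] [Field K1] [Field K2]
    [Algebra F K1] [Algebra F K2] [IsAlgClosed K1] [IsAlgClosed K2]
    (h1 : max #F ℵ₀ < #K1) (h12 : #K1 = #K2) :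
    ∃ σ : K1 ≃+* K2, ∀ x, σ (algebraMap F K1 x) = algebraMap F K2 x := by
  obtain ⟨s, hs⟩ := exists_isTranscendenceBasis F K1
  obtain ⟨t, ht⟩ := exists_isTranscendenceBasis F K2
  have key : ∀ (K : Type u) [Field K] [Algebra F K] [IsAlgClosed K]
      (u : Set K), max #F ℵ₀ < #K → IsTranscendenceBasis F ((↑) : u → K) → #K = #u := by
    intro K _ _ _ u hK hu
    refine le_antisymm ?_ (mk_le_of_injective Subtype.val_injective)
    have h2 := IsAlgClosed.cardinal_le_max_transcendence_basis _ hu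
    have h3 : max (max #F #u) ℵ₀ = max (max #F ℵ₀) #u := sup_right_comm _ _ _
    simp only [Cardinal.lift_id] at h2
    rw [h3] at h2
    rcases le_max_iff.1 h2 with h | h
    · exact absurd (lt_of_lt_of_le hK h) (lt_irrefl _)
    · exact h
  have hs' := key K1 s h1 hs
  have ht' := key K2 t (h12 ▸ h1) ht
  obtain ⟨eq⟩ := Cardinal.eq.1 (hs'.symm.trans (h12.trans ht'))
  let E : Algebra.adjoin F (Set.range ((↑) : s → K1)) ≃ₐ[F]
      Algebra.adjoin F (Set.range ((↑) : t → K2)) :=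
    hs.1.aevalEquiv.symm.trans ((MvPolynomial.renameEquiv F eq).trans ht.1.aevalEquiv)
  letI := IsAlgClosed.isAlgClosure_of_transcendence_basis _ hs
  letI := IsAlgClosed.isAlgClosure_of_transcendence_basis _ ht
  refine ⟨IsAlgClosure.equivOfEquiv K1 K2 E.toRingEquiv, fun x => ?_⟩
  rw [IsScalarTower.algebraMap_apply F (Algebra.adjoin F (Set.range ((↑) : s → K1))) K1 x,
    IsAlgClosure.equivOfEquiv_algebraMap]
  show algebraMap _ K2 (E (algebraMap F _ x)) = _
  rw [AlgEquiv.commutes, ← IsScalarTower.algebraMap_apply]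

lemma exists_ringEquiv_comp {F K : Type u} [Field F] [Field K] [IsAlgClosed K]
    (f g : F →+* K) (h : max #F ℵ₀ < #K) :
    ∃ σ : K ≃+* K, ∀ x, σ (f x) = g x := by
  letI : Algebra F K := f.toAlgebra
  letI : Algebra F (ULift.{u} K) := ((ULift.ringEquiv (R := K)).symm.toRingHom.comp g).toAlgebra
  haveI : IsAlgClosed (ULift.{u} K) := IsAlgClosed.of_ringEquiv K _ (ULift.ringEquiv (R := K)).symm
  have h12 : #K = #(ULift.{u} K) := by simp [Cardinal.mk_uLift]
  obtain ⟨σ, hσ⟩ := exists_equiv_of_two F K (ULift.{u} K) h h12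
  refine ⟨σ.trans (ULift.ringEquiv), fun x => ?_⟩
  have h2 : σ (f x) = (ULift.ringEquiv (R := K)).symm (g x) := hσ x
  show ULift.ringEquiv (σ (f x)) = g x
  rw [h2, RingEquiv.apply_symm_apply]

lemma formallySmooth_of_charZero (F K : Type u) [Field F] [Field K] [Algebra F K]
    [CharZero F] : Algebra.FormallySmooth F K := by
  obtain ⟨s, hs⟩ := exists_isTranscendenceBasis F K
  set M := IntermediateField.adjoin F (Set.range ((↑) : s → K)) with hM
  haveI : Algebra.IsAlgebraic M K := hs.isAlgebraic_field
  haveI : CharZero M := charZero_of_injective_algebraMap (algebraMap F M).injective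
  haveI : Algebra.IsIntegral M K := Algebra.IsAlgebraic.isIntegral
  haveI : Algebra.IsSeparable M K := Algebra.IsSeparable.of_integral _ _
  haveI : Algebra.FormallyEtale M K := Algebra.FormallyEtale.of_isSeparable M K
  haveI : Algebra.FormallySmooth (MvPolynomial s F) (FractionRing (MvPolynomial s F)) :=
    Algebra.FormallySmooth.of_isLocalization (nonZeroDivisors _)
  haveI : Algebra.FormallySmooth F (FractionRing (MvPolynomial s F)) :=
    Algebra.FormallySmooth.comp F (MvPolynomial s F) (FractionRing _)
  haveI : Algebra.FormallySmooth F M := Algebra.FormallySmooth.of_equiv hs.1.aevalEquivField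
  exact Algebra.FormallySmooth.comp F M K

lemma finite_algHom (A B : Type u) [Field A] [CommRing B] [Algebra A B]
    [FiniteDimensional A B] : Finite (B →ₐ[A] A) := by
  haveI : IsArtinianRing B := isArtinian_of_tower A (inferInstance : IsArtinian A B)
  haveI : Finite {I : Ideal B // I.IsMaximal} :=
    (IsArtinianRing.setOfPred_isMaximal_finite B).to_subtype
  apply Finite.of_injective (fun ρ : B →ₐ[A] A =>
    (⟨RingHom.ker ρ, RingHom.ker_isMaximal_of_surjective ρ
      (fun a => ⟨algebraMap A B a, ρ.commutes a⟩)⟩ : {I : Ideal B // I.IsMaximal}))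
  intro ρ1 ρ2 hk
  have hk' : RingHom.ker ρ1 = RingHom.ker ρ2 := congrArg Subtype.val hk
  ext b
  have hb : b - algebraMap A B (ρ1 b) ∈ RingHom.ker ρ1 := by
    simp [RingHom.mem_ker, map_sub, ρ1.commutes]
  rw [hk', RingHom.mem_ker, map_sub, ρ2.commutes, sub_eq_zero] at hb
  exact hb.symm
section
variable {A B L : Type u} [Field A] [CharZero A] [CommRing B] [Algebra A B]
    [FiniteDimensional A B]
    [Field L] [Algebra A L]

set_option maxHeartbeats 1000000 in
lemma lift_aux {F K C T : Type u} [Field F] [Field K] [CharZero F] [CommRing C] [CommRing T]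
    (fK : F →+* K) (fC : F →+* C) (Φ : C →+* T) (g : K →+* T)
    (hΦg : ∀ r, Φ (fC r) = g (fK r))
    (hs : Function.Surjective Φ) (hnil : IsNilpotent (RingHom.ker Φ)) :
    ∃ e' : K →+* C, (∀ x, Φ (e' x) = g x) ∧ ∀ r, e' (fK r) = fC r := by
  letI : Algebra F K := fK.toAlgebra
  letI : Algebra F C := fC.toAlgebra
  letI : Algebra F T := (Φ.comp fC).toAlgebra
  haveI : Algebra.FormallySmooth F K := formallySmooth_of_charZero F K
  let Φ' : C →ₐ[F] T := { toRingHom := Φ, commutes' := fun r => rfl }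
  let g' : K →ₐ[F] T := { toRingHom := g, commutes' := fun r => (hΦg r).symm }
  have hs' : Function.Surjective Φ' := hs
  have hnil' : IsNilpotent (RingHom.ker (Φ' : C →+* T)) := hnil
  refine ⟨(Algebra.FormallySmooth.liftOfSurjective g' Φ' hs' hnil').toRingHom,
    fun x => ?_, fun r =>
      (Algebra.FormallySmooth.liftOfSurjective g' Φ' hs' hnil').commutes r⟩
  exact AlgHom.congr_fun (Algebra.FormallySmooth.comp_liftOfSurjective g' Φ' hs' hnil') x

set_option maxHeartbeats 2000000 in
lemma main_aux
    (hres : ∀ m : Ideal B, m.IsMaximal → Function.Bijective (algebraMap A (B ⧸ m)))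
    (π : B →ₐ[A] A)
    (F : IntermediateField A L)
    (e : F →ₐ[A] TensorProduct A L B)
    (he : ∀ x : F, rhoHom A L B π (e x) = (x : L))
    (K : Type u) [Field K] [Algebra A K] [IsAlgClosed K] (ι : L →ₐ[A] K)
    (hbig : max #F ℵ₀ < #K) :
    ∃ hom : K →ₐ[A] TensorProduct A K B,
      (∀ x : K, rhoHom A K B π (hom x) = x) ∧
      (∀ x : F, hom (ι x) = Algebra.TensorProduct.map ι (AlgHom.id A B) (e x)) ∧
      ∀ ρ : B →ₐ[A] A,
        Function.Bijective fun x : K => rhoHom A K B ρ (hom x) := by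
  classical
  haveI : CharZero K := charZero_of_injective_algebraMap (algebraMap A K).injective
  haveI : CharZero F := charZero_of_injective_algebraMap (algebraMap A F).injective
  set C := TensorProduct A K B with hC
  -- the embeddings τ ρ
  set τ : (B →ₐ[A] A) → (F →ₐ[A] L) := fun ρ => (rhoHom A L B ρ).comp e with hτ
  -- the automorphisms σ ρ
  have hσex : ∀ ρ : B →ₐ[A] A, ∃ σ : K ≃+* K,
      (∀ x : F, σ (ι x) = ι (τ ρ x)) ∧ (ρ = π → σ = RingEquiv.refl K) := by
    intro ρ
    by_cases hρ : ρ = π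
    · refine ⟨RingEquiv.refl K, fun x => ?_, fun _ => rfl⟩
      subst hρ
      simp [hτ, he x]
    · obtain ⟨σ, hσ⟩ := exists_ringEquiv_comp
        ((ι.comp F.val).toRingHom) ((ι.comp (τ ρ)).toRingHom) hbig
      exact ⟨σ, fun x => hσ x, fun h => absurd h hρ⟩
  choose σ hσ1 hσ2 using hσex
  -- the maps ψ ρ : C →ₐ[A] K
  set ψ : (B →ₐ[A] A) → (C →ₐ[A] K) := fun ρ => rhoHom A K B ρ with hψ
  have hψalg : ∀ ρ k, ψ ρ (algebraMap K C k) = k := fun ρ k => rhoHom_algebraMap A K B ρ k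
  -- naturality
  have hnat : ∀ (ρ : B →ₐ[A] A) (z : TensorProduct A L B),
      ψ ρ (Algebra.TensorProduct.map ι (AlgHom.id A B) z) = ι (rhoHom A L B ρ z) := by
    intro ρ z
    induction z with
    | zero => simp
    | tmul l b =>
        rw [Algebra.TensorProduct.map_tmul]
        simp only [AlgHom.coe_id, id_eq]
        show rhoHom A K B ρ _ = _
        rw [rhoHom_tmul, rhoHom_tmul, Algebra.smul_def, Algebra.smul_def, map_mul,
          AlgHom.commutes]
    | add x y hx hy => simp [map_add, hx, hy]
  -- the F-algebra map into C
  set f : F →ₐ[A] C := (Algebra.TensorProduct.map ι (AlgHom.id A B)).comp e with hf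
  -- span lemma
  have hspan : ∀ (ρ : B →ₐ[A] A) (x : C), x - algebraMap K C (ψ ρ x) ∈
      Ideal.span ((fun b : B => (1 : K) ⊗ₜ[A] b) '' (RingHom.ker ρ : Set B)) := by
    intro ρ x
    induction x using TensorProduct.induction_on with
    | zero => simp
    | tmul k b =>
        have h1 : (k ⊗ₜ[A] b : C) - algebraMap K C (ψ ρ (k ⊗ₜ[A] b))
            = k ⊗ₜ[A] (b - ρ b • (1 : B)) := by
          show _ - algebraMap K C (rhoHom A K B ρ _) = _
          rw [rhoHom_tmul, Algebra.TensorProduct.algebraMap_apply,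
            TensorProduct.tmul_sub, Algebra.algebraMap_self_apply, TensorProduct.smul_tmul]
        rw [h1]
        have h2 : (k ⊗ₜ[A] (b - ρ b • (1 : B)) : C)
            = (k ⊗ₜ[A] (1 : B)) * ((1 : K) ⊗ₜ[A] (b - ρ b • (1 : B))) := by
          rw [Algebra.TensorProduct.tmul_mul_tmul, mul_one, one_mul]
        rw [h2]
        refine Ideal.mul_mem_left _ _ (Ideal.subset_span ⟨b - ρ b • (1 : B), ?_, rfl⟩)
        simp [RingHom.mem_ker, map_sub, Algebra.smul_def]
    | add x y hx hy =>
        have : (x + y) - algebraMap K C (ψ ρ (x + y))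
            = (x - algebraMap K C (ψ ρ x)) + (y - algebraMap K C (ψ ρ y)) := by
          rw [map_add, map_add]; ring
        rw [this]
        exact Ideal.add_mem _ hx hy
  -- kernels
  haveI : Finite (B →ₐ[A] A) := finite_algHom A B
  set Kr : (B →ₐ[A] A) → Ideal C := fun ρ => RingHom.ker (ψ ρ) with hKrdef
  have hmax : ∀ ρ, (Kr ρ).IsMaximal := fun ρ =>
    RingHom.ker_isMaximal_of_surjective (ψ ρ) (fun k => ⟨algebraMap K C k, hψalg ρ k⟩)
  have hne : ∀ ρ ρ' : B →ₐ[A] A, ρ ≠ ρ' → Kr ρ ≠ Kr ρ' := by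
    intro ρ ρ' hρρ' heq
    apply hρρ'
    ext b
    have hz : (1 : K) ⊗ₜ[A] b - algebraMap K C (algebraMap A K (ρ b)) ∈ Kr ρ := by
      rw [hKrdef, RingHom.mem_ker, map_sub, hψalg]
      show rhoHom A K B ρ _ - _ = 0
      rw [rhoHom_tmul, Algebra.smul_def, mul_one, sub_self]
    rw [heq, RingHom.mem_ker, map_sub, hψalg] at hz
    have hz2 : ψ ρ' ((1 : K) ⊗ₜ[A] b) = algebraMap A K (ρ' b) := by
      show rhoHom A K B ρ' _ = _
      rw [rhoHom_tmul, Algebra.smul_def, mul_one]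
    rw [hz2, sub_eq_zero] at hz
    exact ((algebraMap A K).injective hz).symm
  have hcop : Pairwise (Function.onFun IsCoprime Kr) := fun ρ ρ' h =>
    (Ideal.isCoprime_iff_sup_eq).2 (Ideal.IsMaximal.coprime_of_ne (hmax ρ) (hmax ρ') (hne ρ ρ' h))
  have hsurjPi : ∀ y : (B →ₐ[A] A) → K, ∃ x : C, ∀ ρ, ψ ρ x = y ρ := by
    intro y
    obtain ⟨xbar, hx⟩ := Ideal.quotientInfToPiQuotient_surj hcop
      (fun ρ => Ideal.Quotient.mk (Kr ρ) (algebraMap K C (y ρ)))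
    obtain ⟨x, rfl⟩ := Ideal.Quotient.mk_surjective xbar
    refine ⟨x, fun ρ => ?_⟩
    have h5 := congrFun hx ρ
    rw [Ideal.quotientInfToPiQuotient_mk'] at h5
    have h6 : x - algebraMap K C (y ρ) ∈ Kr ρ := (Ideal.Quotient.eq).1 h5
    rw [hKrdef, RingHom.mem_ker, map_sub, hψalg, sub_eq_zero] at h6
    exact h6
  -- nilpotency of the intersection of the kernels
  haveI : IsNoetherianRing C := isNoetherian_of_tower K (inferInstance : IsNoetherian K C)
  haveI : IsArtinianRing B := isArtinian_of_tower A (inferInstance : IsArtinian A B)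
  have hIlow : (⨅ ρ, Kr ρ) ≤ nilradical C := by
    rw [nilradical_eq_sInf]
    refine le_sInf fun P hP => ?_
    haveI hPP : P.IsPrime := hP
    set m : Ideal B := P.comap
      (Algebra.TensorProduct.includeRight (R := A) (A := K) (B := B)).toRingHom with hm
    haveI : m.IsPrime := hPP.comap _
    have hmmax : m.IsMaximal := (IsArtinianRing.isPrime_iff_isMaximal m).1 inferInstance
    set E := RingEquiv.ofBijective (algebraMap A (B ⧸ m)) (hres m hmmax) with hE
    set ρm : B →ₐ[A] A :=
      { toRingHom := (E.symm : (B ⧸ m) →+* A).comp (Ideal.Quotient.mk m)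
        commutes' := by
          intro a
          apply E.injective
          show E (E.symm _) = _
          rw [RingEquiv.apply_symm_apply]
          rfl } with hρm
    have hker : RingHom.ker ρm = m := by
      ext b
      rw [RingHom.mem_ker]
      constructor
      · intro h
        have h2 : E (E.symm (Ideal.Quotient.mk m b)) = E 0 := by
          rw [show E.symm (Ideal.Quotient.mk m b) = (0 : A) from h]
        rw [RingEquiv.apply_symm_apply, map_zero] at h2
        exact (Ideal.Quotient.eq_zero_iff_mem).1 h2
      · intro h
        show E.symm _ = 0
        rw [Ideal.Quotient.eq_zero_iff_mem.2 h, map_zero]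
    refine le_trans (iInf_le _ ρm) ?_
    intro x hx
    have h6 := hspan ρm x
    rw [hKrdef, RingHom.mem_ker] at hx
    rw [hx, map_zero, sub_zero] at h6
    refine Ideal.span_le.2 ?_ h6
    rintro c ⟨b, hb, rfl⟩
    have hbm : b ∈ m := by rwa [← hker]
    exact hbm
  obtain ⟨n, hn⟩ := IsNoetherianRing.isNilpotent_nilradical C
  have hnilI : IsNilpotent (⨅ ρ, Kr ρ) := by
    refine ⟨n, ?_⟩
    rw [Ideal.zero_eq_bot, ← le_bot_iff, ← Ideal.zero_eq_bot, ← hn]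
    exact Ideal.pow_right_mono hIlow n
  -- apply the lifting lemma
  obtain ⟨e', hcomp, hext⟩ := lift_aux (F := F) (K := K) (C := C) (T := (B →ₐ[A] A) → K)
    (ι.comp F.val).toRingHom f.toRingHom
    (Pi.ringHom fun ρ => (ψ ρ).toRingHom)
    (Pi.ringHom fun ρ => (σ ρ : K →+* K))
    (fun r => funext fun ρ => by
      show ψ ρ (f r) = σ ρ (ι (↑r : L))
      rw [hσ1 ρ r]
      exact hnat ρ (e r))
    (fun y => by
      obtain ⟨x, hx⟩ := hsurjPi y
      exact ⟨x, funext hx⟩)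
    (by
      have hkerΦ : RingHom.ker (Pi.ringHom fun ρ => (ψ ρ).toRingHom : C →+* ((B →ₐ[A] A) → K))
          = ⨅ ρ, Kr ρ := by
        ext x
        rw [RingHom.mem_ker, Ideal.mem_iInf]
        constructor
        · intro h ρ
          rw [hKrdef, RingHom.mem_ker]
          exact congrFun h ρ
        · intro h
          funext ρ
          exact h ρ
      rw [hkerΦ]
      exact hnilI)
  -- assemble the algebra homomorphism over `A`
  set hom : K →ₐ[A] C :=
    { toRingHom := e'
      commutes' := by
        intro a
        show e' (algebraMap A K a) = algebraMap A C a
        have h1 : algebraMap A K a = (ι.comp F.val).toRingHom (algebraMap A F a) :=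
          ((ι.comp F.val).commutes a).symm
        rw [h1, hext]
        exact f.commutes a } with hhom
  refine ⟨hom, ?_, ?_, ?_⟩
  · intro x
    have h8 := congrFun (hcomp x) π
    have h9 : ψ π (e' x) = σ π x := h8
    rw [hσ2 π rfl] at h9
    exact h9
  · intro x
    show e' (ι ↑x) = f x
    exact hext x
  · intro ρ
    have h8 : (fun x : K => rhoHom A K B ρ (hom x)) = ⇑(σ ρ) := by
      funext x
      exact congrFun (hcomp x) ρ
    rw [h8]
    exact (σ ρ).bijective

end

/-- Let `A` be a field of characteristic zero, `B` a finite-dimensional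
commutative `A`-algebra all of whose residue fields are `A`, and `π : B → A` an `A`-algebra
homomorphism.  Let `F ⊆ L` be field extensions of `A` and `e : F → L ⊗[A] B` an `A`-algebra
homomorphism with `π^L ∘ e` the inclusion `F ↪ L`.  Then there exist a field extension `L'`
of `L` and an `A`-algebra homomorphism `e' : L' → L' ⊗[A] B` such that (i) `π^{L'} ∘ e' = id`;
(ii) `e'` extends `e`; and (iii) `ρ^{L'} ∘ e' : L' → L'` is bijective for every `ρ : B → A`. -/
theorem exists_inversive_extension
    {A B L : Type u} [Field A] [CharZero A] [CommRing B] [Algebra A B]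
    [FiniteDimensional A B]
    (hres : ∀ m : Ideal B, m.IsMaximal → Function.Bijective (algebraMap A (B ⧸ m)))
    (π : B →ₐ[A] A)
    [Field L] [Algebra A L]
    (F : IntermediateField A L)
    (e : F →ₐ[A] TensorProduct A L B)
    (he : ∀ x : F, rhoHom A L B π (e x) = (x : L)) :
    ∃ (D : DRingData A B) (ι : L →ₐ[A] D.carrier),
      (∀ x : D.carrier, rhoHom A D.carrier B π (D.hom x) = x) ∧
      (∀ x : F, D.hom (ι x) = Algebra.TensorProduct.map ι (AlgHom.id A B) (e x)) ∧
      ∀ ρ : B →ₐ[A] A,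
        Function.Bijective fun x : D.carrier => rhoHom A D.carrier B ρ (D.hom x) := by
  classical
  haveI : CharZero L := charZero_of_injective_algebraMap (algebraMap A L).injective
  haveI : Infinite L := Infinite.of_injective (Nat.cast : ℕ → L) Nat.cast_injective
  have hbig : max #F ℵ₀ <
      #(AlgebraicClosure (FractionRing (MvPolynomial (Set L) L))) := by
    have h0 : ℵ₀ ≤ #L := Cardinal.aleph0_le_mk L
    have h1 : #F ≤ #L := Cardinal.mk_le_of_injective Subtype.val_injective
    have h2 : #L < #(Set L) := by rw [Cardinal.mk_set]; exact Cardinal.cantor _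
    have h3 : #(Set L) ≤ #(AlgebraicClosure (FractionRing (MvPolynomial (Set L) L))) := by
      refine Cardinal.mk_le_of_injective (f := fun s : Set L =>
        algebraMap (FractionRing (MvPolynomial (Set L) L))
          (AlgebraicClosure (FractionRing (MvPolynomial (Set L) L)))
          (algebraMap (MvPolynomial (Set L) L) (FractionRing (MvPolynomial (Set L) L))
            (MvPolynomial.X s))) ?_
      intro s t h
      exact MvPolynomial.X_injective
        (IsFractionRing.injective (MvPolynomial (Set L) L) (FractionRing (MvPolynomial (Set L) L))
          ((algebraMap (FractionRing (MvPolynomial (Set L) L))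
            (AlgebraicClosure (FractionRing (MvPolynomial (Set L) L)))).injective h))
    exact max_lt (h1.trans_lt (h2.trans_le h3)) (lt_of_le_of_lt h0 (h2.trans_le h3))
  obtain ⟨hom, h1, h2, h3⟩ := main_aux hres π F e he
    (AlgebraicClosure (FractionRing (MvPolynomial (Set L) L)))
    (IsScalarTower.toAlgHom A L _) hbig
  exact ⟨{ carrier := _, hom := hom }, IsScalarTower.toAlgHom A L _, h1, h2, h3⟩
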